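/- For every integer N ≥ 2 and every α > 0, the expected receptive radius of the linear-decay distribution is nonincreasing in the decay parameter: if 0 ≤ β₁ ≤ β₂ ≤ α/(N-1), then μ(Q_{N,α,β₂}) ≤ μ(Q_{N,α,β₁}). -/
import Mathlib

lemma sum_id_real (n : ℕ) : ∑ i ∈ Finset.range n, (i : ℝ) = n * (n - 1) / 2 := by
  induction n with
  | zero => simp
  | succ k ih =>
    rw [Finset.sum_range_succ, ih]
    push_cast
    ring

lemma sum_sq_real (n : ℕ) :
    ∑ i ∈ Finset.range n, (i : ℝ) ^ 2 = n * (n - 1) * (2 * n - 1) / 6 := by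
  induction n with
  | zero => simp
  | succ k ih =>
    rw [Finset.sum_range_succ, ih]
    push_cast
    ring

lemma sum_lin (n : ℕ) (α β : ℝ) :
    ∑ Δ ∈ Finset.range n, (Δ : ℝ) * (α - β * Δ) =
      α * (n * (n - 1) / 2) - β * (n * (n - 1) * (2 * n - 1) / 6) := by
  have h := sum_id_real n
  have h2 := sum_sq_real n
  calc ∑ Δ ∈ Finset.range n, (Δ : ℝ) * (α - β * Δ)
      = ∑ Δ ∈ Finset.range n, (α * (Δ : ℝ) - β * (Δ : ℝ) ^ 2) := by
        apply Finset.sum_congr rfl; intro x _; ring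
    _ = α * (∑ i ∈ Finset.range n, (i : ℝ)) -
        β * (∑ i ∈ Finset.range n, (i : ℝ) ^ 2) := by
        rw [Finset.sum_sub_distrib, Finset.mul_sum, Finset.mul_sum]
    _ = _ := by rw [h, h2]

/-- For `N ≥ 2` and `α > 0`, the expected receptive radius of the
linear-decay distribution `Q_{N,α,β}(Δ) = (α - βΔ)/S`, `S = αN - βN(N-1)/2`, is
nonincreasing in the decay parameter `β` on `[0, α/(N-1)]`. -/
theorem linDecay_recRadius_antitone (N : ℕ) (hN : 2 ≤ N) (α β₁ β₂ : ℝ)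
    (hα : 0 < α) (hβ₁0 : 0 ≤ β₁) (h12 : β₁ ≤ β₂) (hβ₂ : β₂ ≤ α / ((N : ℝ) - 1)) :
    ∑ Δ ∈ Finset.range N,
        (Δ : ℝ) * ((α - β₂ * Δ) / (α * N - β₂ * N * ((N : ℝ) - 1) / 2)) ≤
      ∑ Δ ∈ Finset.range N,
        (Δ : ℝ) * ((α - β₁ * Δ) / (α * N - β₁ * N * ((N : ℝ) - 1) / 2)) := by
  set n : ℝ := (N : ℝ) with hn
  have hn2 : (2 : ℝ) ≤ n := by rw [hn]; exact_mod_cast hN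
  have hn1 : (0 : ℝ) < n - 1 := by linarith
  have hβ₂0 : 0 ≤ β₂ := le_trans hβ₁0 h12
  have hβ₂' : β₂ * (n - 1) ≤ α := by
    rw [div_eq_mul_inv] at hβ₂
    calc β₂ * (n - 1) ≤ α * (n - 1)⁻¹ * (n - 1) := by
          apply mul_le_mul_of_nonneg_right hβ₂ hn1.le
      _ = α := by field_simp
  have hβ₁' : β₁ * (n - 1) ≤ α :=
    le_trans (mul_le_mul_of_nonneg_right h12 hn1.le) hβ₂'
  have hS : ∀ β : ℝ, 0 ≤ β → β * (n - 1) ≤ α → 0 < α * n - β * n * (n - 1) / 2 := by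
    intro β hβ0 hβ'
    have : β * n * (n - 1) / 2 ≤ α * n / 2 := by
      have : β * (n - 1) * n ≤ α * n := mul_le_mul_of_nonneg_right hβ' (by linarith)
      nlinarith
    nlinarith
  have hS₁ := hS β₁ hβ₁0 hβ₁'
  have hS₂ := hS β₂ hβ₂0 hβ₂'
  have key : ∀ β : ℝ,
      ∑ Δ ∈ Finset.range N, (Δ : ℝ) * ((α - β * Δ) / (α * n - β * n * (n - 1) / 2)) =
        (α * (n * (n - 1) / 2) - β * (n * (n - 1) * (2 * n - 1) / 6)) /
          (α * n - β * n * (n - 1) / 2) := by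
    intro β
    rw [← sum_lin N α β, Finset.sum_div]
    apply Finset.sum_congr rfl
    intro x _
    ring
  rw [key β₁, key β₂]
  rw [div_le_div_iff₀ hS₂ hS₁]
  have hfac : 0 ≤ n ^ 2 * (n - 1) * (n + 1) :=
    mul_nonneg (mul_nonneg (sq_nonneg n) hn1.le) (by linarith)
  nlinarith [mul_nonneg (mul_nonneg hα.le (sub_nonneg.2 h12)) hfac]
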